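/- Let E(M) = ∑ᵢ pᵢ Uᵢ M Uᵢ† be a mixture-of-unitaries channel on 2×2 complex matrices, let ρ₁, …, ρₙ be 2×2 matrices with E(ρⱼ) = ρ⁰ for every j, and let ρ = ∑ⱼ λⱼρⱼ be any affine combination (λⱼ real, ∑ λⱼ = 1). Then ‖ρ⁰ − (1/2)·I‖_F ≤ ‖ρ − (1/2)·I‖_F, where ‖·‖_F is the Frobenius norm. (Every achievable output state ρ⁰ is at least as close to the maximally mixed state (1/2)I as every element of the affine span of the plaintext set.) -/

import Mathlib

open Matrix

noncomputable def frobNorm (M : Matrix (Fin 2) (Fin 2) ℂ) : ℝ :=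
  Real.sqrt (∑ j, ∑ k, ‖M j k‖ ^ 2)

lemma frobNorm_eq_trace (M : Matrix (Fin 2) (Fin 2) ℂ) :
    frobNorm M = Real.sqrt (Matrix.trace (Mᴴ * M)).re := by
  unfold frobNorm
  congr 1
  simp only [Matrix.trace, Matrix.diag_apply, Matrix.mul_apply,
    Matrix.conjTranspose_apply, Complex.re_sum]
  rw [Finset.sum_comm]
  refine Finset.sum_congr rfl fun j _ => Finset.sum_congr rfl fun k _ => ?_
  rw [Complex.sq_norm]
  simp [Complex.normSq_apply, Complex.star_def, Complex.mul_re]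

lemma frobNorm_unitary (V M : Matrix (Fin 2) (Fin 2) ℂ)
    (hV : V ∈ Matrix.unitaryGroup (Fin 2) ℂ) :
    frobNorm (V * M * Vᴴ) = frobNorm M := by
  have h1 : Vᴴ * V = 1 := Matrix.mem_unitaryGroup_iff'.mp hV
  rw [frobNorm_eq_trace, frobNorm_eq_trace]
  congr 2
  have h : (V * M * Vᴴ)ᴴ * (V * M * Vᴴ) = V * (Mᴴ * M) * Vᴴ := by
    simp only [Matrix.conjTranspose_mul, Matrix.conjTranspose_conjTranspose]
    calc V * (Mᴴ * Vᴴ) * (V * M * Vᴴ)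
        = V * Mᴴ * (Vᴴ * V) * (M * Vᴴ) := by noncomm_ring
      _ = V * (Mᴴ * M) * Vᴴ := by rw [h1, mul_one]; noncomm_ring
  rw [h, Matrix.trace_mul_cycle, h1, one_mul]

attribute [local instance] Matrix.frobeniusSeminormedAddCommGroup
  Matrix.frobeniusNormedSpace Matrix.frobeniusIsBoundedSMul

lemma frobNorm_eq_norm (M : Matrix (Fin 2) (Fin 2) ℂ) : frobNorm M = ‖M‖ := by
  rw [Matrix.frobenius_norm_def, frobNorm]
  rw [Real.sqrt_eq_rpow, one_div]
  congr 1
  refine Finset.sum_congr rfl fun j _ => Finset.sum_congr rfl fun k _ => ?_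
  rw [← Real.rpow_natCast (‖M j k‖) 2]
  norm_num

theorem stmt_3 (n m : ℕ)
    (U : Fin n → Matrix (Fin 2) (Fin 2) ℂ)
    (hU : ∀ i, U i ∈ Matrix.unitaryGroup (Fin 2) ℂ)
    (p : Fin n → ℝ) (hp : ∀ i, 0 ≤ p i) (hpsum : ∑ i, p i = 1)
    (ρs : Fin m → Matrix (Fin 2) (Fin 2) ℂ) (ρ0 : Matrix (Fin 2) (Fin 2) ℂ)
    (hE : ∀ j, ∑ i, (p i : ℂ) • (U i * ρs j * (U i)ᴴ) = ρ0)
    (lam : Fin m → ℝ) (hlam : ∑ j, lam j = 1)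
    (ρ : Matrix (Fin 2) (Fin 2) ℂ) (hρ : ρ = ∑ j, (lam j : ℂ) • ρs j) :
    frobNorm (ρ0 - (1/2 : ℂ) • 1) ≤ frobNorm (ρ - (1/2 : ℂ) • 1) := by
  have hpsumC : ∑ i, (p i : ℂ) = 1 := by
    rw [← Complex.ofReal_sum, hpsum, Complex.ofReal_one]
  have hEρ : ∑ i, (p i : ℂ) • (U i * ρ * (U i)ᴴ) = ρ0 := by
    rw [hρ]
    have h : ∀ i, (U i * ∑ j, (lam j : ℂ) • ρs j) * (U i)ᴴ
        = ∑ j, (lam j : ℂ) • (U i * ρs j * (U i)ᴴ) := by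
      intro i
      rw [Matrix.mul_sum, Finset.sum_mul]
      exact Finset.sum_congr rfl fun j _ => by
        rw [Matrix.mul_smul, Matrix.smul_mul]
    simp_rw [h, Finset.smul_sum]
    rw [Finset.sum_comm]
    have h2 : ∀ j, ∑ i, (p i : ℂ) • (lam j : ℂ) • (U i * ρs j * (U i)ᴴ)
        = (lam j : ℂ) • ρ0 := by
      intro j
      rw [← hE j, Finset.smul_sum]
      exact Finset.sum_congr rfl fun i _ => smul_comm _ _ _
    simp_rw [h2, ← Finset.sum_smul, ← Complex.ofReal_sum, hlam]
    simp
  have key : ρ0 - (1/2 : ℂ) • 1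
      = ∑ i, (p i : ℂ) • (U i * (ρ - (1/2 : ℂ) • 1) * (U i)ᴴ) := by
    have h : ∀ i, U i * (ρ - (1/2 : ℂ) • 1) * (U i)ᴴ
        = U i * ρ * (U i)ᴴ - (1/2 : ℂ) • 1 := by
      intro i
      have h2 : U i * (U i)ᴴ = 1 := Matrix.mem_unitaryGroup_iff.mp (hU i)
      rw [Matrix.mul_sub, Matrix.sub_mul, Matrix.mul_smul, Matrix.smul_mul, mul_one, h2]
    simp_rw [h, smul_sub, Finset.sum_sub_distrib, hEρ, ← Finset.sum_smul, hpsumC, one_smul]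
  rw [key, frobNorm_eq_norm, frobNorm_eq_norm]
  calc ‖∑ i, (p i : ℂ) • (U i * (ρ - (1/2 : ℂ) • 1) * (U i)ᴴ)‖
      ≤ ∑ i, ‖(p i : ℂ) • (U i * (ρ - (1/2 : ℂ) • 1) * (U i)ᴴ)‖ := norm_sum_le _ _
    _ = ∑ i, p i * ‖ρ - (1/2 : ℂ) • 1‖ := by
        refine Finset.sum_congr rfl fun i _ => ?_
        rw [norm_smul]
        have h := frobNorm_unitary (U i) (ρ - (1/2 : ℂ) • 1) (hU i)
        rw [frobNorm_eq_norm, frobNorm_eq_norm] at h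
        rw [h, Complex.norm_real, Real.norm_eq_abs, abs_of_nonneg (hp i)]
    _ = ‖ρ - (1/2 : ℂ) • 1‖ := by rw [← Finset.sum_mul, hpsum, one_mul]
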